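/- A finite group H is solvable if and only if the homomorphism 1 → H from the trivial group has the right lifting property with respect to every group homomorphism f : A → B that has the left lifting property with respect to 1 → C for every abelian group C. That is: H is solvable iff for every group homomorphism f : A → B such that (for all abelian groups C, f ⧄ (1 → C)), one has f ⧄ (1 → H). -/

import Mathlib

/-- `f` has the left lifting property with respect to `g` in the category of groups. -/
def GroupLift {A B X Y : Type*} [Group A] [Group B] [Group X] [Group Y]
    (f : A →* B) (g : X →* Y) : Prop :=
  ∀ (u : A →* X) (v : B →* Y), g.comp u = v.comp f →
    ∃ w : B →* X, w.comp f = u ∧ g.comp w = v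

universe u1 u2 u3 u4

lemma aux_perfect_eq_bot {H : Type u1} [Group H] (K : Subgroup H)
    (hperf : commutator ↥K = ⊤)
    (h : ∀ (A : Type u2) (B : Type u3) [Group A] [Group B] (f : A →* B),
        (∀ (C : Type u4) [CommGroup C], GroupLift f (1 : PUnit →* C)) →
          GroupLift f (1 : PUnit →* H)) [Small.{u3} ↥K] : K = ⊥ := by
  let e : Shrink.{u3} ↥K ≃* ↥K := Shrink.mulEquiv
  have einj : Function.Injective e.toMonoidHom := e.injective
  have esurj : Function.Surjective e.toMonoidHom := e.surjective
  have hperf' : commutator (Shrink.{u3} ↥K) = ⊤ := by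
    apply Subgroup.map_injective einj
    rw [commutator_def, Subgroup.map_commutator, ← MonoidHom.range_eq_map,
      MonoidHom.range_eq_top_of_surjective _ esurj, ← commutator_def, hperf]
  obtain ⟨w, -, hw⟩ := h PUnit (Shrink.{u3} ↥K) 1 (by
    intro C _ u v _
    refine ⟨1, MonoidHom.ext fun _ => Subsingleton.elim _ _, ?_⟩
    ext x
    simp only [MonoidHom.comp_apply, MonoidHom.one_apply]
    symm
    have hx : x ∈ commutator (Shrink.{u3} ↥K) := hperf' ▸ Subgroup.mem_top x
    exact Abelianization.commutator_subset_ker v hx) 1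
    (K.subtype.comp e.toMonoidHom)
    (MonoidHom.ext fun x => by simp)
  rw [eq_bot_iff]
  intro x hx
  have h1 := congrArg (fun φ => φ (e.symm ⟨x, hx⟩)) hw
  simp only [MonoidHom.comp_apply, MonoidHom.one_apply,
    MulEquiv.coe_toMonoidHom, MulEquiv.apply_symm_apply] at h1
  simp only [Subgroup.mem_bot]
  have h2 : K.subtype ⟨x, hx⟩ = 1 := h1.symm
  simpa using h2

/-- A finite group `H` is solvable iff `1 → H` has the right lifting property with
respect to every homomorphism having the left lifting property with respect to
`1 → C` for every abelian group `C`. -/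
theorem stmt1 {H : Type*} [Group H] [Finite H] :
    IsSolvable H ↔
      ∀ (A B : Type*) [Group A] [Group B] (f : A →* B),
        (∀ (C : Type*) [CommGroup C], GroupLift f (1 : PUnit →* C)) →
          GroupLift f (1 : PUnit →* H) := by
  constructor
  · intro hs A B _ _ f hf u v huv
    refine ⟨1, MonoidHom.ext fun _ => Subsingleton.elim _ _, ?_⟩
    have hvf : ∀ a : A, v (f a) = 1 := by
      intro a
      have := congrArg (fun φ => φ a) huv
      simpa using this.symm
    have hSall : ∀ b : B, ∃ a : A, Abelianization.of (f a) = Abelianization.of b := by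
      by_contra hcon
      push_neg at hcon
      obtain ⟨b, hb⟩ := hcon
      set S : Subgroup (Abelianization B) := Subgroup.map Abelianization.of f.range with hS
      have hbS : Abelianization.of b ∉ S := by
        rintro ⟨y, ⟨a, rfl⟩, hy⟩
        exact hb a hy
      have hq : Additive.ofMul (QuotientGroup.mk' S (Abelianization.of b)) ≠ 0 := by
        simpa [QuotientGroup.eq_one_iff] using hbS
      obtain ⟨c, hc⟩ := CharacterModule.exists_character_apply_ne_zero_of_ne_zero hq
      let m : Abelianization B ⧸ S →* Multiplicative (AddCircle (1 : ℚ)) :=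
        AddMonoidHom.toMultiplicativeRight c
      let v0 : B →* ULift (Multiplicative (AddCircle (1 : ℚ))) :=
        (MulEquiv.ulift.symm.toMonoidHom).comp
          (m.comp ((QuotientGroup.mk' S).comp Abelianization.of))
      obtain ⟨w0, -, hw0⟩ := hf (ULift (Multiplicative (AddCircle (1 : ℚ)))) 1 v0 (by
        ext a
        simp only [MonoidHom.comp_apply, MonoidHom.one_apply, v0]
        have : QuotientGroup.mk' S (Abelianization.of (f a)) = 1 := by
          rw [QuotientGroup.mk'_apply, QuotientGroup.eq_one_iff]
          exact Subgroup.mem_map_of_mem _ ⟨a, rfl⟩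
        rw [this, map_one, map_one])
      have hb1 : v0 b = 1 := by
        have := congrArg (fun φ => φ b) hw0
        simpa using this.symm
      have : m (QuotientGroup.mk' S (Abelianization.of b)) = 1 := by
        have := congrArg MulEquiv.ulift hb1
        simpa [v0] using this
      apply hc
      exact this
    have key : ∀ b : B, v b ∈ ⁅v.range, v.range⁆ := by
      intro b
      obtain ⟨a, ha⟩ := hSall b
      have hc : (f a)⁻¹ * b ∈ commutator B := by
        rwa [← QuotientGroup.eq (s := commutator B)]
      have hvb : v b = v ((f a)⁻¹ * b) := by
        rw [map_mul, map_inv, hvf a, inv_one, one_mul]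
      rw [hvb]
      have : v ((f a)⁻¹ * b) ∈ Subgroup.map v (commutator B) :=
        Subgroup.mem_map_of_mem _ hc
      rwa [commutator_def, Subgroup.map_commutator, ← MonoidHom.range_eq_map] at this
    have hrange : ∀ n, v.range ≤ derivedSeries H n := by
      intro n
      induction n with
      | zero => exact le_top
      | succ n ih =>
        rintro x ⟨b, rfl⟩
        rw [derivedSeries_succ]
        exact Subgroup.commutator_mono ih ih (key b)
    obtain ⟨n, hn⟩ := hs.solvable
    ext b
    have hvb : v b ∈ (⊥ : Subgroup H) := hn ▸ hrange n ⟨b, rfl⟩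
    rw [Subgroup.mem_bot] at hvb
    simp [hvb]
  · intro h
    have hstab : ∃ n, derivedSeries H (n + 1) = derivedSeries H n := by
      by_contra hc
      push_neg at hc
      have hlt : ∀ n, Nat.card (derivedSeries H (n + 1)) < Nat.card (derivedSeries H n) := by
        intro n
        have hle : derivedSeries H (n + 1) < derivedSeries H n := by
          refine lt_of_le_of_ne ?_ (hc n)
          rw [derivedSeries_succ]
          have := derivedSeries_normal H n
          exact Subgroup.commutator_le_left _ _
        have hss : ((derivedSeries H (n + 1) : Subgroup H) : Set H) ⊂
            ((derivedSeries H n : Subgroup H) : Set H) := by exact_mod_cast hle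
        have := Set.ncard_lt_ncard hss (Set.toFinite _)
        simpa [← Nat.card_coe_set_eq] using this
      have hbound : ∀ n, Nat.card (derivedSeries H n) + n ≤ Nat.card (derivedSeries H 0) := by
        intro n
        induction n with
        | zero => simp
        | succ n ih =>
          have := hlt n
          omega
      have h1 := hbound (Nat.card (derivedSeries H 0) + 1)
      have h2 : 0 < Nat.card (derivedSeries H (Nat.card (derivedSeries H 0) + 1)) := Nat.card_pos
      omega
    obtain ⟨n, hn⟩ := hstab
    set K := derivedSeries H n with hK
    have hperf : commutator ↥K = ⊤ := by
      apply Subgroup.map_injective K.subtype_injective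
      rw [commutator_def, Subgroup.map_commutator, ← MonoidHom.range_eq_map,
        Subgroup.range_subtype, ← derivedSeries_succ, hn]
    have hbot : K = ⊥ := aux_perfect_eq_bot K hperf h
    exact ⟨⟨n, hbot⟩⟩
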